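/- Let k ≥ 3 and let Ĝ = (V, E) be a finite simple graph with |V| = n and |E| = m ≥ 1, and with power-hypergraph vertex set W = V ∪ (E × {1,…,k−2}). Let m* : V × V → ℕ be Eulerian with m*(i,j) = 0 unless {i,j} ∈ E, and suppose that for every edge {i,j} ∈ E the number m*(i,j) + m*(j,i) is positive and even. Define the arc-multiplicity function m on W by: m(i,j) = m*(i,j) for i, j ∈ V; m(i,(e,t)) = m*(i,j) whenever e = {i,j} ∈ E and t ∈ {1,…,k−2}; m((e,t),x) = (m*(i,j)+m*(j,i))/2 for e = {i,j} ∈ E, t ∈ {1,…,k−2} and every x ∈ e^{(k)} with x ≠ (e,t); and m = 0 on all other pairs. Let L_D and L_{D*} be the out-degree Laplacians of m and m*, and fix a vertex v₀ ∈ V; let L̂_D and L̂_{D*} denote these Laplacians with the row and column of v₀ deleted. Then det(L̂_D) = 2^{m−n+1} · k^{m(k−3)+n−1} · (Π_{{i,j}∈E} ((m*(i,j)+m*(j,i))/2)^{k−2}) · det(L̂_{D*}). -/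

import Mathlib

open Matrix SimpleGraph Finset

/-- Half of the total multiplicity `(m*(i,j) + m*(j,i))/2` carried by an unordered pair. -/
def halfSum {V : Type*} (mstar : V → V → ℕ) : Sym2 V → ℕ :=
  Sym2.lift ⟨fun i j => (mstar i j + mstar j i) / 2, fun i j => by simp [add_comm]⟩

/-- The arc-multiplicity function of the lifted multi-digraph `D` on the vertex set
`W = V ⊕ (E × Fin (k-2))` of the `k`-power hypergraph, obtained from a multi-digraph
`D*` on `V` with arc-multiplicity function `mstar`: arcs among original vertices are kept;
each original vertex sends `m*(i,j)` arcs to every core vertex of the hyperedge of `{i,j}`;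
each core vertex of the hyperedge of `{i,j}` sends `(m*(i,j)+m*(j,i))/2` arcs to every other
vertex of that hyperedge. -/
noncomputable def liftedMult {V : Type*} [DecidableEq V] (G : SimpleGraph V) (k : ℕ)
    (mstar : V → V → ℕ) :
    (V ⊕ (G.edgeSet × Fin (k - 2))) → (V ⊕ (G.edgeSet × Fin (k - 2))) → ℕ
  | Sum.inl i, Sum.inl j => mstar i j
  | Sum.inl i, Sum.inr (e, _) =>
      if h : i ∈ (e : Sym2 V) then mstar i (Sym2.Mem.other h) else 0
  | Sum.inr (e, _), Sum.inl i =>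
      if i ∈ (e : Sym2 V) then halfSum mstar (e : Sym2 V) else 0
  | Sum.inr (e, t), Sum.inr (e', t') =>
      if e = e' ∧ t ≠ t' then halfSum mstar (e : Sym2 V) else 0

/-- The out-degree Laplacian of a multi-digraph given by an arc-multiplicity function. -/
def lap {S : Type*} [Fintype S] [DecidableEq S] (m : S → S → ℕ) : Matrix S S ℝ :=
  Matrix.of fun x y => if x = y then (∑ z, (m x z : ℝ)) else -(m x y : ℝ)

section AuxHelpers
set_option linter.unusedSectionVars false


lemma lap_ne {S : Type*} [Fintype S] [DecidableEq S] (m : S → S → ℕ) {x y : S} (h : x ≠ y) :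
    lap m x y = -(m x y : ℝ) := by
  simp [lap, h]

lemma lap_diag {S : Type*} [Fintype S] [DecidableEq S] (m : S → S → ℕ) (x : S) :
    lap m x x = ∑ z, (m x z : ℝ) := by
  simp [lap]

variable {V : Type*} [Fintype V] [DecidableEq V] (G : SimpleGraph V) [DecidableRel G.Adj]

lemma other_eq {i j : V} (h : i ∈ s(i,j)) : Sym2.Mem.other h = j :=
  Sym2.congr_right.mp (Sym2.other_spec h)

lemma adj_other {e : G.edgeSet} (h : (i : V) ∈ (e : Sym2 V)) :
    G.Adj i (Sym2.Mem.other h) := by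
  have he := e.2
  rw [← Sym2.other_spec h] at he
  exact he

lemma sum_edges_dite (i : V) (g : V → ℝ) (hg : ∀ j, ¬ G.Adj i j → g j = 0) :
    ∑ e : G.edgeSet, (if h : i ∈ (e : Sym2 V) then g (Sym2.Mem.other h) else 0) = ∑ j, g j := by
  classical
  set f : Sym2 V → ℝ := fun e => if h : i ∈ e then g (Sym2.Mem.other h) else 0 with hf
  have h1 : ∑ e : G.edgeSet, f ↑e = ∑ e ∈ G.edgeFinset, f e :=
    (Finset.sum_subtype G.edgeFinset (fun e => mem_edgeFinset) f).symm
  have h2 : ∑ e ∈ G.edgeFinset, f e = ∑ e ∈ G.incidenceFinset i, f e := by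
    refine (Finset.sum_subset ?_ ?_).symm
    · intro e he
      exact mem_edgeFinset.mpr (G.incidenceSet_subset i ((G.mem_incidenceFinset i e).mp he))
    · intro e he hne
      have : ¬ i ∈ e := by
        intro hi
        exact hne ((G.mem_incidenceFinset i e).mpr ⟨mem_edgeFinset.mp he, hi⟩)
      simp [hf, this]
  have h3 : ∑ e ∈ G.incidenceFinset i, f e = ∑ j ∈ G.neighborFinset i, g j := by
    refine Finset.sum_bij' (i := fun e he => Sym2.Mem.other (((G.mem_incidenceFinset i e).mp he).2))
      (j := fun j hj => s(i, j)) ?_ ?_ ?_ ?_ ?_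
    · intro e he
      rw [mem_neighborFinset]
      exact adj_other G (e := ⟨e, ((G.mem_incidenceFinset i e).mp he).1⟩)
        (((G.mem_incidenceFinset i e).mp he).2)
    · intro j hj
      rw [G.mem_incidenceFinset]
      rw [mem_neighborFinset] at hj
      exact ⟨G.mem_edgeSet.mpr hj, Sym2.mem_mk_left _ _⟩
    · intro e he
      exact Sym2.other_spec _
    · intro j hj
      exact other_eq _
    · intro e he
      simp only [hf]
      rw [dif_pos ((G.mem_incidenceFinset i e).mp he).2]
  have h4 : ∑ j ∈ G.neighborFinset i, g j = ∑ j, g j := by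
    refine Finset.sum_subset (Finset.subset_univ _) ?_
    intro j _ hj
    exact hg j (by simpa [mem_neighborFinset] using hj)
  rw [show (∑ e : G.edgeSet, (if h : i ∈ (e : Sym2 V) then g (Sym2.Mem.other h) else 0)) = ∑ e : G.edgeSet, f ↑e from rfl, h1, h2, h3, h4]

lemma sum_edges_pair (i l : V) (hil : i ≠ l) (g : V → ℝ) (hg : ∀ j, ¬ G.Adj i j → g j = 0) :
    ∑ e : G.edgeSet, (if l ∈ (e : Sym2 V) then
      (if h : i ∈ (e : Sym2 V) then g (Sym2.Mem.other h) else 0) else 0) = g l := by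
  classical
  by_cases hadj : G.Adj i l
  · have hmem : (⟨s(i,l), hadj⟩ : G.edgeSet) ∈ (Finset.univ : Finset G.edgeSet) := Finset.mem_univ _
    rw [Finset.sum_eq_single_of_mem _ hmem]
    · have hl : l ∈ (s(i,l) : Sym2 V) := Sym2.mem_mk_right _ _
      have hi : i ∈ (s(i,l) : Sym2 V) := Sym2.mem_mk_left _ _
      rw [if_pos hl, dif_pos hi, other_eq]
    · intro e _ hne
      by_cases hl : l ∈ (e : Sym2 V)
      · rw [if_pos hl]
        by_cases hi : i ∈ (e : Sym2 V)
        · exact absurd (Subtype.ext ((Sym2.mem_and_mem_iff hil).mp ⟨hi, hl⟩)) hne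
        · rw [dif_neg hi]
      · rw [if_neg hl]
  · rw [hg l hadj]
    refine Finset.sum_eq_zero fun e _ => ?_
    by_cases hl : l ∈ (e : Sym2 V)
    · rw [if_pos hl]
      by_cases hi : i ∈ (e : Sym2 V)
      · exfalso
        have hee := (Sym2.mem_and_mem_iff hil).mp ⟨hi, hl⟩
        have h2 := e.2
        rw [hee] at h2
        exact hadj (G.mem_edgeSet.mp h2)
      · rw [dif_neg hi]
    · rw [if_neg hl]

variable (k : ℕ) (mstar : V → V → ℕ)

lemma halfSum_pos (hpos : ∀ i j, G.Adj i j → 0 < mstar i j + mstar j i)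
    (heven : ∀ i j, G.Adj i j → Even (mstar i j + mstar j i)) (e : G.edgeSet) :
    0 < halfSum mstar ↑e := by
  obtain ⟨e, he⟩ := e
  induction e with
  | _ a b =>
    have hadj : G.Adj a b := G.mem_edgeSet.mp he
    have h1 := hpos a b hadj
    obtain ⟨c, hc⟩ := heven a b hadj
    show 0 < (mstar a b + mstar b a) / 2
    omega

lemma vertex_rowsum (hk : 3 ≤ k) (hsupp : ∀ i j, ¬ G.Adj i j → mstar i j = 0) (i : V) :
    ∑ z : V ⊕ (G.edgeSet × Fin (k-2)), (liftedMult G k mstar (Sum.inl i) z : ℝ)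
      = ((k : ℝ) - 1) * ∑ j, (mstar i j : ℝ) := by
  rw [Fintype.sum_sum_type]
  have h1 : ∑ j : V, (liftedMult G k mstar (Sum.inl i) (Sum.inl j) : ℝ) = ∑ j, (mstar i j : ℝ) := rfl
  have h2 : ∑ p : G.edgeSet × Fin (k-2), (liftedMult G k mstar (Sum.inl i) (Sum.inr p) : ℝ)
      = ((k-2 : ℕ) : ℝ) * ∑ j, (mstar i j : ℝ) := by
    rw [Fintype.sum_prod_type]
    have h3 : ∀ e : G.edgeSet, ∀ t : Fin (k-2),
        (liftedMult G k mstar (Sum.inl i) (Sum.inr (e, t)) : ℝ)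
          = if h : i ∈ (e : Sym2 V) then (mstar i (Sym2.Mem.other h) : ℝ) else 0 := by
      intro e t
      show ((if h : i ∈ (e : Sym2 V) then mstar i (Sym2.Mem.other h) else 0 : ℕ) : ℝ) = _
      rw [apply_dite (Nat.cast : ℕ → ℝ)]
      simp
    calc ∑ e : G.edgeSet, ∑ _t : Fin (k-2),
          (liftedMult G k mstar (Sum.inl i) (Sum.inr (_, _t)) : ℝ)
        = ∑ e : G.edgeSet, ((k-2 : ℕ) : ℝ) *
            (if h : i ∈ (e : Sym2 V) then (mstar i (Sym2.Mem.other h) : ℝ) else 0) := by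
          refine Finset.sum_congr rfl fun e _ => ?_
          rw [Finset.sum_congr rfl fun t _ => h3 e t, Finset.sum_const, Finset.card_univ,
            Fintype.card_fin, nsmul_eq_mul]
      _ = ((k-2 : ℕ) : ℝ) * ∑ j, (mstar i j : ℝ) := by
          rw [← Finset.mul_sum, sum_edges_dite G i (fun j => (mstar i j : ℝ)) (fun j hj => by simp [hsupp i j hj])]
  rw [h1, h2]
  have : ((k-2 : ℕ) : ℝ) = (k : ℝ) - 2 := by
    rw [Nat.cast_sub (by omega)]; norm_num
  rw [this]; ring

lemma core_rowsum (hk : 3 ≤ k) (e : G.edgeSet) (t : Fin (k-2)) :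
    ∑ z : V ⊕ (G.edgeSet × Fin (k-2)), (liftedMult G k mstar (Sum.inr (e, t)) z : ℝ)
      = ((k : ℝ) - 1) * ((halfSum mstar ↑e : ℕ) : ℝ) := by
  set h : ℝ := ((halfSum mstar ↑e : ℕ) : ℝ) with hh
  rw [Fintype.sum_sum_type]
  have h1 : ∑ j : V, (liftedMult G k mstar (Sum.inr (e, t)) (Sum.inl j) : ℝ) = 2 * h := by
    have key : ∀ j : V, (liftedMult G k mstar (Sum.inr (e, t)) (Sum.inl j) : ℝ)
        = if j ∈ (e : Sym2 V) then h else 0 := by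
      intro j
      show ((if j ∈ (e : Sym2 V) then halfSum mstar ↑e else 0 : ℕ) : ℝ) = _
      rw [apply_ite (Nat.cast : ℕ → ℝ)]
      simp [hh]
    rw [Finset.sum_congr rfl fun j _ => key j]
    obtain ⟨e, he⟩ := e
    induction e with
    | _ a b =>
      have hab : a ≠ b := (G.mem_edgeSet.mp he).ne
      have : ∀ j : V, (if j ∈ (s(a, b) : Sym2 V) then h else 0)
          = (if j = a then h else 0) + (if j = b then h else 0) := by
        intro j
        rcases eq_or_ne j a with rfl | hja
        · simp [hab]
        · rcases eq_or_ne j b with rfl | hjb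
          · simp [hja]
          · simp [Sym2.mem_iff, hja, hjb]
      rw [Finset.sum_congr rfl fun j _ => this j, Finset.sum_add_distrib,
        Finset.sum_ite_eq' Finset.univ a (fun _ => h), Finset.sum_ite_eq' Finset.univ b
          (fun _ => h)]
      simp; ring
  have h2 : ∑ p : G.edgeSet × Fin (k-2), (liftedMult G k mstar (Sum.inr (e, t)) (Sum.inr p) : ℝ)
      = (((k-2 : ℕ) : ℝ) - 1) * h := by
    have key : ∀ p : G.edgeSet × Fin (k-2), (liftedMult G k mstar (Sum.inr (e, t)) (Sum.inr p) : ℝ)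
        = if e = p.1 ∧ t ≠ p.2 then h else 0 := by
      intro ⟨e', t'⟩
      show ((if e = e' ∧ t ≠ t' then halfSum mstar ↑e else 0 : ℕ) : ℝ) = _
      rw [apply_ite (Nat.cast : ℕ → ℝ)]
      simp [hh]
    rw [Finset.sum_congr rfl fun p _ => key p, Fintype.sum_prod_type]
    rw [Finset.sum_eq_single e (fun e' _ hne => by
      refine Finset.sum_eq_zero fun t' _ => ?_
      simp [Ne.symm hne]) (fun habs => absurd (Finset.mem_univ e) habs)]
    have : ∀ t' : Fin (k-2), (if e = e ∧ t ≠ t' then h else 0) = h - (if t' = t then h else 0) := by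
      intro t'
      rcases eq_or_ne t t' with rfl | hne
      · simp
      · simp [hne, Ne.symm hne]
    rw [Finset.sum_congr rfl fun t' _ => this t', Finset.sum_sub_distrib,
      Finset.sum_ite_eq' Finset.univ t (fun _ => h), Finset.sum_const, Finset.card_univ,
      Fintype.card_fin]
    simp [nsmul_eq_mul]
    ring
  rw [h1, h2]
  have : ((k-2 : ℕ) : ℝ) = (k : ℝ) - 2 := by
    rw [Nat.cast_sub (by omega)]; norm_num
  rw [this]; ring

noncomputable def Dmat : Matrix (G.edgeSet × Fin (k-2)) (G.edgeSet × Fin (k-2)) ℝ :=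
  fun p q => lap (liftedMult G k mstar) (Sum.inr p) (Sum.inr q)

noncomputable def Dinv : Matrix (G.edgeSet × Fin (k-2)) (G.edgeSet × Fin (k-2)) ℝ :=
  fun p q => if p.1 = q.1 then
    ((if p.2 = q.2 then 1 else 0) + 1/2) / (((halfSum mstar ↑p.1 : ℕ) : ℝ) * k) else 0

lemma Dmat_apply (hk : 3 ≤ k) (p q : G.edgeSet × Fin (k-2)) :
    Dmat G k mstar p q = if p.1 = q.1 then
      ((halfSum mstar ↑p.1 : ℕ) : ℝ) * ((if p.2 = q.2 then (k : ℝ) else 0) - 1) else 0 := by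
  obtain ⟨e, t⟩ := p
  obtain ⟨e', t'⟩ := q
  show lap (liftedMult G k mstar) (Sum.inr (e, t)) (Sum.inr (e', t')) = _
  rcases eq_or_ne e e' with rfl | hee
  · rcases eq_or_ne t t' with rfl | htt
    · show (if _ = _ then _ else _) = _
      rw [if_pos rfl, core_rowsum G k mstar hk e t]
      simp; ring
    · show (if _ = _ then _ else _) = _
      rw [if_neg (by simp [htt])]
      show -((if e = e ∧ t ≠ t' then halfSum mstar ↑e else 0 : ℕ) : ℝ) = _
      rw [if_pos ⟨rfl, htt⟩]
      simp [htt]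
  · show (if _ = _ then _ else _) = _
    rw [if_neg (by simp [hee])]
    show -((if e = e' ∧ t ≠ t' then halfSum mstar ↑e else 0 : ℕ) : ℝ) = _
    rw [if_neg (by simp [hee])]
    simp [hee]

lemma Dmat_mul_Dinv (hk : 3 ≤ k)
    (hpos : ∀ i j, G.Adj i j → 0 < mstar i j + mstar j i)
    (heven : ∀ i j, G.Adj i j → Even (mstar i j + mstar j i)) :
    Dmat G k mstar * Dinv G k mstar = 1 := by
  have kne : (k : ℝ) ≠ 0 := Nat.cast_ne_zero.mpr (by omega)
  have hpos' : ∀ e : G.edgeSet, (0 : ℝ) < ((halfSum mstar ↑e : ℕ) : ℝ) := fun e => by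
    exact_mod_cast halfSum_pos G mstar hpos heven e
  have hcast : ((k-2 : ℕ) : ℝ) = (k : ℝ) - 2 := by rw [Nat.cast_sub (by omega)]; norm_num
  ext ⟨e, t⟩ ⟨e'', t''⟩
  rw [Matrix.mul_apply, Fintype.sum_prod_type]
  rw [Finset.sum_eq_single e (fun e' _ hne => Finset.sum_eq_zero fun t' _ => by
      rw [Dmat_apply G k mstar hk]
      simp [Ne.symm hne]) (fun habs => absurd (Finset.mem_univ e) habs)]
  rcases eq_or_ne e e'' with rfl | hee
  · have hne := (hpos' e).ne'
    have key : ∀ t' : Fin (k-2), Dmat G k mstar (e, t) (e, t') * Dinv G k mstar (e, t') (e, t'')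
        = (if t = t' then (1:ℝ) else 0) * (if t' = t'' then 1 else 0)
          + (1/2) * (if t = t' then 1 else 0) - (1/(k:ℝ)) * (if t' = t'' then 1 else 0)
          - 1/(2*(k:ℝ)) := by
      intro t'
      rw [Dmat_apply G k mstar hk]
      show (if e = e then _ else _) * (if e = e then _ else _) = _
      rw [if_pos rfl, if_pos rfl]
      rcases eq_or_ne t t' with rfl | h1
      · rcases eq_or_ne t t'' with rfl | h2
        · simp only [if_pos rfl, ite_true]
          field_simp
          ring
        · simp only [if_pos rfl, if_neg h2, ite_true]
          field_simp
          ring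
      · rcases eq_or_ne t' t'' with rfl | h2
        · simp only [if_neg h1, if_pos rfl]
          field_simp
          ring
        · simp only [if_neg h1, if_neg h2]
          field_simp
          ring
    rw [Finset.sum_congr rfl fun t' _ => key t']
    rw [Finset.sum_sub_distrib, Finset.sum_sub_distrib, Finset.sum_add_distrib]
    have e1 : ∑ t' : Fin (k-2), (if t = t' then (1:ℝ) else 0) * (if t' = t'' then 1 else 0)
        = if t = t'' then 1 else 0 := by
      rw [Finset.sum_congr rfl (fun t' _ => by rw [ite_mul, one_mul, zero_mul]),
        Finset.sum_ite_eq Finset.univ t (fun t' => if t' = t'' then (1:ℝ) else 0)]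
      simp
    have e2 : ∑ t' : Fin (k-2), (1/2 : ℝ) * (if t = t' then 1 else 0) = 1/2 := by
      rw [← Finset.mul_sum, Finset.sum_ite_eq Finset.univ t (fun _ => (1:ℝ))]
      simp
    have e3 : ∑ t' : Fin (k-2), (1/(k:ℝ)) * (if t' = t'' then 1 else 0) = 1/(k:ℝ) := by
      rw [← Finset.mul_sum, Finset.sum_ite_eq' Finset.univ t'' (fun _ => (1:ℝ))]
      simp
    have e4 : ∑ _t' : Fin (k-2), (1/(2*(k:ℝ))) = ((k-2:ℕ):ℝ)/(2*(k:ℝ)) := by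
      rw [Finset.sum_const, Finset.card_univ, Fintype.card_fin, nsmul_eq_mul]
      ring
    rw [e1, e2, e3, e4, hcast]
    have hone : (1 : Matrix (↑G.edgeSet × Fin (k-2)) (↑G.edgeSet × Fin (k-2)) ℝ) (e,t) (e,t'')
        = if t = t'' then 1 else 0 := by
      rcases eq_or_ne t t'' with rfl | htt
      · simp
      · rw [Matrix.one_apply_ne (by simp [htt]), if_neg htt]
    rw [hone]
    have harith : (1:ℝ)/2 - 1/(k:ℝ) - ((k:ℝ)-2)/(2*(k:ℝ)) = 0 := by
      field_simp
      try ring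
    rcases eq_or_ne t t'' with rfl | htt
    · rw [if_pos rfl]
      linarith
    · rw [if_neg htt]
      linarith
  · rw [Finset.sum_eq_zero fun t' _ => by
      show _ * Dinv G k mstar (e, t') (e'', t'') = 0
      have : Dinv G k mstar (e, t') (e'', t'') = 0 := if_neg hee
      rw [this, mul_zero]]
    rw [Matrix.one_apply_ne (by simp [hee])]

noncomputable def Amat (v₀ : V) : Matrix {i : V // i ≠ v₀} {i : V // i ≠ v₀} ℝ :=
  fun x y => lap (liftedMult G k mstar) (Sum.inl x.1) (Sum.inl y.1)

noncomputable def Bmat (v₀ : V) : Matrix {i : V // i ≠ v₀} (G.edgeSet × Fin (k-2)) ℝ :=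
  fun x p => lap (liftedMult G k mstar) (Sum.inl x.1) (Sum.inr p)

noncomputable def Cmat (v₀ : V) : Matrix (G.edgeSet × Fin (k-2)) {i : V // i ≠ v₀} ℝ :=
  fun p y => lap (liftedMult G k mstar) (Sum.inr p) (Sum.inl y.1)

lemma Amat_apply (hk : 3 ≤ k) (hsupp : ∀ i j, ¬ G.Adj i j → mstar i j = 0) (v₀ : V)
    (x y : {i : V // i ≠ v₀}) :
    Amat G k mstar v₀ x y = if (x : V) = (y : V) then ((k:ℝ) - 1) * ∑ j, (mstar x.1 j : ℝ)
      else -(mstar x.1 y.1 : ℝ) := by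
  show lap (liftedMult G k mstar) (Sum.inl x.1) (Sum.inl y.1) = _
  rcases eq_or_ne (x : V) (y : V) with heq | hne
  · rw [if_pos heq, ← heq]
    show (if _ = _ then _ else _) = _
    rw [if_pos rfl, vertex_rowsum G k mstar hk hsupp]
  · rw [if_neg hne]
    show (if _ = _ then _ else _) = _
    rw [if_neg (by simp [hne])]
    rfl

lemma Dinv_mul_Cmat (hk : 3 ≤ k)
    (hpos : ∀ i j, G.Adj i j → 0 < mstar i j + mstar j i)
    (heven : ∀ i j, G.Adj i j → Even (mstar i j + mstar j i)) (v₀ : V)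
    (p : G.edgeSet × Fin (k-2)) (y : {i : V // i ≠ v₀}) :
    (Dinv G k mstar * Cmat G k mstar v₀) p y
      = if (y : V) ∈ (p.1 : Sym2 V) then -(1/2 : ℝ) else 0 := by
  have kne : (k : ℝ) ≠ 0 := Nat.cast_ne_zero.mpr (by omega)
  have hcast : ((k-2 : ℕ) : ℝ) = (k : ℝ) - 2 := by rw [Nat.cast_sub (by omega)]; norm_num
  obtain ⟨e, t⟩ := p
  have hpose : (0 : ℝ) < ((halfSum mstar ↑e : ℕ) : ℝ) := by
    exact_mod_cast halfSum_pos G mstar hpos heven e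
  rw [Matrix.mul_apply, Fintype.sum_prod_type]
  have hC : ∀ e' : G.edgeSet, ∀ t' : Fin (k-2), Cmat G k mstar v₀ (e', t') y
      = -(if (y : V) ∈ (e' : Sym2 V) then ((halfSum mstar ↑e' : ℕ) : ℝ) else 0) := by
    intro e' t'
    rw [show Cmat G k mstar v₀ (e', t') y
        = lap (liftedMult G k mstar) (Sum.inr (e', t')) (Sum.inl y.1) from rfl,
      lap_ne _ (by simp)]
    show -((if (y:V) ∈ (e' : Sym2 V) then halfSum mstar ↑e' else 0 : ℕ) : ℝ) = _
    rw [apply_ite (Nat.cast : ℕ → ℝ)]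
    norm_num
  rw [Finset.sum_eq_single e (fun e' _ hne => Finset.sum_eq_zero fun t' _ => by
      have : Dinv G k mstar (e, t) (e', t') = 0 := if_neg (Ne.symm hne)
      rw [this, zero_mul]) (fun habs => absurd (Finset.mem_univ e) habs)]
  have hD : ∀ t' : Fin (k-2), Dinv G k mstar (e, t) (e, t')
      = ((if t = t' then (1:ℝ) else 0) + 1/2) / (((halfSum mstar ↑e : ℕ) : ℝ) * k) := fun t' =>
    if_pos rfl
  by_cases hy : (y : V) ∈ (e : Sym2 V)
  · rw [if_pos hy]
    have : ∀ t' : Fin (k-2), Dinv G k mstar (e, t) (e, t') * Cmat G k mstar v₀ (e, t') y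
        = -(((if t = t' then (1:ℝ) else 0) + 1/2) / (k : ℝ)) := by
      intro t'
      rw [hD, hC, if_pos hy]
      field_simp
    rw [Finset.sum_congr rfl fun t' _ => this t']
    rw [Finset.sum_neg_distrib]
    rw [← Finset.sum_div, Finset.sum_add_distrib, Finset.sum_ite_eq Finset.univ t (fun _ => (1:ℝ)),
      Finset.sum_const, Finset.card_univ, Fintype.card_fin, nsmul_eq_mul]
    simp only [Finset.mem_univ, if_pos]
    rw [hcast]
    field_simp
    ring
  · rw [if_neg hy]
    refine Finset.sum_eq_zero fun t' _ => ?_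
    rw [hC, if_neg hy]
    simp

lemma schur_eq (hk : 3 ≤ k) (hsupp : ∀ i j, ¬ G.Adj i j → mstar i j = 0)
    (hpos : ∀ i j, G.Adj i j → 0 < mstar i j + mstar j i)
    (heven : ∀ i j, G.Adj i j → Even (mstar i j + mstar j i)) (v₀ : V) :
    Amat G k mstar v₀ - Bmat G k mstar v₀ * Dinv G k mstar * Cmat G k mstar v₀
      = ((k:ℝ)/2) • ((lap mstar).submatrix (fun i : {i : V // i ≠ v₀} => i.val) fun i => i.val) := by
  have kne : (k : ℝ) ≠ 0 := Nat.cast_ne_zero.mpr (by omega)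
  have hcast : ((k-2 : ℕ) : ℝ) = (k : ℝ) - 2 := by rw [Nat.cast_sub (by omega)]; norm_num
  ext x y
  have hB : ∀ (e : G.edgeSet) (t : Fin (k-2)), Bmat G k mstar v₀ x (e, t)
      = -(if h : (x:V) ∈ (e : Sym2 V) then (mstar x.1 (Sym2.Mem.other h) : ℝ) else 0) := by
    intro e t
    rw [show Bmat G k mstar v₀ x (e, t)
        = lap (liftedMult G k mstar) (Sum.inl x.1) (Sum.inr (e, t)) from rfl,
      lap_ne _ (by simp)]
    rw [show liftedMult G k mstar (Sum.inl x.1) (Sum.inr (e, t))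
        = if h : (x:V) ∈ (e : Sym2 V) then mstar x.1 (Sym2.Mem.other h) else 0 from rfl]
    rw [apply_dite (Nat.cast : ℕ → ℝ)]
    norm_num
  have hterm : ∀ (e : G.edgeSet) (t : Fin (k-2)),
      Bmat G k mstar v₀ x (e, t) * (Dinv G k mstar * Cmat G k mstar v₀) ((e, t)) y
        = (1/2 : ℝ) * (if (y:V) ∈ (e : Sym2 V) then
            (if h : (x:V) ∈ (e : Sym2 V) then (mstar x.1 (Sym2.Mem.other h) : ℝ) else 0) else 0) := by
    intro e t
    rw [hB, Dinv_mul_Cmat G k mstar hk hpos heven v₀]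
    by_cases hy : (y:V) ∈ (e : Sym2 V)
    · rw [if_pos hy, if_pos hy]
      ring
    · rw [if_neg hy, if_neg hy]
      ring
  have hsum : ∑ p : G.edgeSet × Fin (k-2),
      Bmat G k mstar v₀ x p * (Dinv G k mstar * Cmat G k mstar v₀) p y
        = (((k-2:ℕ):ℝ)/2) * (if (x:V) = (y:V) then ∑ j, (mstar x.1 j : ℝ)
            else (mstar x.1 y.1 : ℝ)) := by
    rw [Fintype.sum_prod_type]
    have step1 : ∀ e : G.edgeSet, ∑ t : Fin (k-2),
        Bmat G k mstar v₀ x (e, t) * (Dinv G k mstar * Cmat G k mstar v₀) ((e, t)) y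
          = ((k-2:ℕ):ℝ) * ((1/2 : ℝ) * (if (y:V) ∈ (e : Sym2 V) then
              (if h : (x:V) ∈ (e : Sym2 V) then (mstar x.1 (Sym2.Mem.other h) : ℝ) else 0)
              else 0)) := by
      intro e
      rw [Finset.sum_congr rfl fun t _ => hterm e t, Finset.sum_const, Finset.card_univ,
        Fintype.card_fin, nsmul_eq_mul]
    rw [Finset.sum_congr rfl fun e _ => step1 e, ← Finset.mul_sum]
    rw [← Finset.mul_sum]
    rcases eq_or_ne (x : V) (y : V) with heq | hne
    · rw [if_pos heq]
      have : ∀ e : G.edgeSet, (if (y:V) ∈ (e : Sym2 V) then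
          (if h : (x:V) ∈ (e : Sym2 V) then (mstar x.1 (Sym2.Mem.other h) : ℝ) else 0) else 0)
            = (if h : (x:V) ∈ (e : Sym2 V) then (mstar x.1 (Sym2.Mem.other h) : ℝ) else 0) := by
        intro e
        rw [← heq]
        by_cases hx : (x:V) ∈ (e : Sym2 V)
        · rw [if_pos hx]
        · rw [if_neg hx, dif_neg hx]
      rw [Finset.sum_congr rfl fun e _ => this e,
        sum_edges_dite G (x : V) (fun j => (mstar x.1 j : ℝ))
          (fun j hj => by simp [hsupp _ j hj])]
      ring
    · rw [if_neg hne]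
      rw [sum_edges_pair G (x : V) (y : V) hne (fun j => (mstar x.1 j : ℝ))
        (fun j hj => by simp [hsupp _ j hj])]
      ring
  rw [Matrix.sub_apply, Matrix.mul_assoc, Matrix.mul_apply, hsum, Amat_apply G k mstar hk hsupp,
    Matrix.smul_apply, Matrix.submatrix_apply, smul_eq_mul]
  rcases eq_or_ne (x : V) (y : V) with heq | hne
  · rw [if_pos heq, if_pos heq, ← heq, lap_diag, hcast]
    ring
  · rw [if_neg hne, if_neg hne, lap_ne _ hne, hcast]
    ring

lemma det_K (hk : 3 ≤ k) :
    (Matrix.of fun t t' : Fin (k-2) => ((if t = t' then (k:ℝ) else 0) - 1)).det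
      = 2 * (k:ℝ)^(k-3) := by
  have kne : (k : ℝ) ≠ 0 := Nat.cast_ne_zero.mpr (by omega)
  have hK : (Matrix.of fun t t' : Fin (k-2) => ((if t = t' then (k:ℝ) else 0) - 1))
      = (k:ℝ) • (1 + Matrix.replicateCol Unit (fun _ : Fin (k-2) => -(1/(k:ℝ)))
          * Matrix.replicateRow Unit (fun _ : Fin (k-2) => (1:ℝ))) := by
    ext t t'
    rw [Matrix.smul_apply, Matrix.add_apply, Matrix.mul_apply]
    simp only [Matrix.of_apply, Matrix.replicateCol_apply, Matrix.replicateRow_apply, Finset.univ_unique,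
      Finset.sum_singleton, Matrix.one_apply, smul_eq_mul]
    rcases eq_or_ne t t' with rfl | hne
    · rw [if_pos rfl, if_pos rfl]
      field_simp
      try ring
    · rw [if_neg hne, if_neg hne]
      field_simp
      try ring
  rw [hK, Matrix.det_smul, Matrix.det_one_add_replicateCol_mul_replicateRow]
  have hdot : (fun _ : Fin (k-2) => (1:ℝ)) ⬝ᵥ (fun _ : Fin (k-2) => -(1/(k:ℝ)))
      = -(((k-2:ℕ):ℝ)/(k:ℝ)) := by
    rw [dotProduct]
    rw [Finset.sum_const, Finset.card_univ, Fintype.card_fin, nsmul_eq_mul]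
    ring
  rw [hdot, Fintype.card_fin]
  have hcast : ((k-2 : ℕ) : ℝ) = (k : ℝ) - 2 := by rw [Nat.cast_sub (by omega)]; norm_num
  have hpow : (k:ℝ)^(k-2) = (k:ℝ)^(k-3) * k := by
    rw [← pow_succ]
    congr 1
    omega
  rw [hcast, hpow]
  field_simp
  ring

lemma det_Dmat (hk : 3 ≤ k) :
    (Dmat G k mstar).det
      = ∏ e : G.edgeSet, (2 * (k:ℝ)^(k-3) * ((halfSum mstar ↑e : ℕ):ℝ)^(k-2)) := by
  set blk : G.edgeSet → Matrix (Fin (k-2)) (Fin (k-2)) ℝ := fun e =>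
    Matrix.of fun t t' => ((halfSum mstar ↑e : ℕ):ℝ) * ((if t = t' then (k:ℝ) else 0) - 1)
    with hblk
  have hD : Dmat G k mstar = (Matrix.blockDiagonal blk).submatrix
      (Equiv.prodComm G.edgeSet (Fin (k-2))) (Equiv.prodComm G.edgeSet (Fin (k-2))) := by
    ext ⟨e, t⟩ ⟨e', t'⟩
    rw [Dmat_apply G k mstar hk, Matrix.submatrix_apply]
    show _ = Matrix.blockDiagonal blk (t, e) (t', e')
    rw [Matrix.blockDiagonal_apply]
    rcases eq_or_ne e e' with rfl | hne
    · rw [if_pos rfl, if_pos rfl]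
      rfl
    · rw [if_neg hne, if_neg hne]
  rw [hD, Matrix.det_submatrix_equiv_self, Matrix.det_blockDiagonal]
  refine Finset.prod_congr rfl fun e _ => ?_
  have : blk e = ((halfSum mstar ↑e : ℕ):ℝ)
      • (Matrix.of fun t t' : Fin (k-2) => ((if t = t' then (k:ℝ) else 0) - 1)) := by
    ext t t'
    simp [hblk]
  rw [this, Matrix.det_smul, det_K k hk, Fintype.card_fin]
  ring

def sumEquiv (v₀ : V) :
    {x : V ⊕ (G.edgeSet × Fin (k-2)) // x ≠ Sum.inl v₀}
      ≃ ({i : V // i ≠ v₀} ⊕ (G.edgeSet × Fin (k-2))) where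
  toFun x := match x with
    | ⟨Sum.inl i, h⟩ => Sum.inl ⟨i, fun hi => h (by rw [hi])⟩
    | ⟨Sum.inr p, _⟩ => Sum.inr p
  invFun := Sum.elim (fun i => ⟨Sum.inl i.1, by simp [i.2]⟩) (fun p => ⟨Sum.inr p, by simp⟩)
  left_inv := by rintro ⟨(i | p), h⟩ <;> rfl
  right_inv := by rintro (i | p) <;> rfl

lemma reindex_eq (v₀ : V) :
    ((lap (liftedMult G k mstar)).submatrix
        (fun x : {x : V ⊕ (G.edgeSet × Fin (k-2)) // x ≠ Sum.inl v₀} => x.val)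
        (fun x => x.val))
      = (Matrix.fromBlocks (Amat G k mstar v₀) (Bmat G k mstar v₀) (Cmat G k mstar v₀)
          (Dmat G k mstar)).submatrix (sumEquiv G k v₀) (sumEquiv G k v₀) := by
  ext x y
  rcases x with ⟨(i | p), hx⟩ <;> rcases y with ⟨(j | q), hy⟩ <;> rfl

theorem det_reduced_laplacian_of_lifted_multidigraph'
    (hk : 3 ≤ k) (hm : 1 ≤ G.edgeFinset.card)
    (heuler : ∀ i, ∑ j, mstar i j = ∑ j, mstar j i)
    (hsupp : ∀ i j, ¬ G.Adj i j → mstar i j = 0)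
    (hpos : ∀ i j, G.Adj i j → 0 < mstar i j + mstar j i)
    (heven : ∀ i j, G.Adj i j → Even (mstar i j + mstar j i))
    (v₀ : V) :
    Matrix.det ((lap (liftedMult G k mstar)).submatrix
        (fun x : {x : V ⊕ (G.edgeSet × Fin (k - 2)) // x ≠ Sum.inl v₀} => x.val)
        (fun x => x.val)) =
      (2 : ℝ) ^ ((G.edgeFinset.card : ℤ) - (Fintype.card V : ℤ) + 1) *
      (k : ℝ) ^ (G.edgeFinset.card * (k - 3) + Fintype.card V - 1) *
      (∏ e ∈ G.edgeFinset, ((halfSum mstar e : ℕ) : ℝ) ^ (k - 2)) *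
      Matrix.det ((lap mstar).submatrix
        (fun i : {i : V // i ≠ v₀} => i.val) (fun i => i.val)) := by
  classical
  have hn : 1 ≤ Fintype.card V := Fintype.card_pos_iff.mpr ⟨v₀⟩
  letI : Invertible (Dmat G k mstar) := ⟨Dinv G k mstar,
    mul_eq_one_comm.mp (Dmat_mul_Dinv G k mstar hk hpos heven),
    Dmat_mul_Dinv G k mstar hk hpos heven⟩
  rw [reindex_eq G k mstar v₀, Matrix.det_submatrix_equiv_self, Matrix.det_fromBlocks₂₂]
  have hinv : ⅟(Dmat G k mstar) = Dinv G k mstar := rfl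
  rw [hinv, schur_eq G k mstar hk hsupp hpos heven v₀, Matrix.det_smul,
    det_Dmat G k mstar hk]
  have hcard : Fintype.card {i : V // i ≠ v₀} = Fintype.card V - 1 := by
    have h1 := Fintype.card_subtype_compl (fun i : V => i = v₀)
    simpa using h1
  have hprod : ∏ e : G.edgeSet, (2 * (k:ℝ)^(k-3) * ((halfSum mstar ↑e : ℕ):ℝ)^(k-2))
      = (2 * (k:ℝ)^(k-3))^(G.edgeFinset.card)
          * ∏ e ∈ G.edgeFinset, ((halfSum mstar e : ℕ):ℝ)^(k-2) := by
    rw [Finset.prod_mul_distrib, Finset.prod_const, Finset.card_univ, ← G.edgeFinset_card]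
    congr 1
    exact (Finset.prod_subtype G.edgeFinset (fun e => G.mem_edgeFinset)
      (fun e => ((halfSum mstar e : ℕ):ℝ)^(k-2))).symm
  have hz : (2:ℝ)^((G.edgeFinset.card:ℤ)-(Fintype.card V:ℤ)+1)
      = 2^(G.edgeFinset.card) / 2^(Fintype.card V - 1) := by
    rw [show (G.edgeFinset.card:ℤ)-(Fintype.card V:ℤ)+1
        = (G.edgeFinset.card:ℤ) - ((Fintype.card V - 1 : ℕ):ℤ) by omega,
      zpow_sub₀ (two_ne_zero), zpow_natCast, zpow_natCast]
  have hk3 : (k:ℝ)^(G.edgeFinset.card*(k-3)+Fintype.card V-1)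
      = ((k:ℝ)^(k-3))^(G.edgeFinset.card) * (k:ℝ)^(Fintype.card V - 1) := by
    rw [← pow_mul, ← pow_add]
    congr 1
    rw [Nat.mul_comm (k-3) G.edgeFinset.card]
    generalize G.edgeFinset.card * (k-3) = a
    omega
  have h2ne : (2:ℝ)^(Fintype.card V - 1) ≠ 0 := by positivity
  rw [hprod, hcard, hz, hk3, div_mul_eq_mul_div]
  rw [mul_pow, div_pow]
  field_simp

end AuxHelpers

theorem det_reduced_laplacian_of_lifted_multidigraph
    {V : Type*} [Fintype V] [DecidableEq V] (G : SimpleGraph V) [DecidableRel G.Adj]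
    (k : ℕ) (hk : 3 ≤ k) (hm : 1 ≤ G.edgeFinset.card)
    (mstar : V → V → ℕ)
    (heuler : ∀ i, ∑ j, mstar i j = ∑ j, mstar j i)
    (hsupp : ∀ i j, ¬ G.Adj i j → mstar i j = 0)
    (hpos : ∀ i j, G.Adj i j → 0 < mstar i j + mstar j i)
    (heven : ∀ i j, G.Adj i j → Even (mstar i j + mstar j i))
    (v₀ : V) :
    Matrix.det ((lap (liftedMult G k mstar)).submatrix
        (fun x : {x : V ⊕ (G.edgeSet × Fin (k - 2)) // x ≠ Sum.inl v₀} => x.val)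
        (fun x => x.val)) =
      (2 : ℝ) ^ ((G.edgeFinset.card : ℤ) - (Fintype.card V : ℤ) + 1) *
      (k : ℝ) ^ (G.edgeFinset.card * (k - 3) + Fintype.card V - 1) *
      (∏ e ∈ G.edgeFinset, ((halfSum mstar e : ℕ) : ℝ) ^ (k - 2)) *
      Matrix.det ((lap mstar).submatrix
        (fun i : {i : V // i ≠ v₀} => i.val) (fun i => i.val)) := by
  exact det_reduced_laplacian_of_lifted_multidigraph' G k mstar hk hm heuler hsupp hpos heven v₀
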